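/- Let n₁ ≥ 1, K ∈ ℝ, and let (λ₁,…,λ_{n₁}, μ₁,…,μ_{n₁}) be real-analytic functions on an open interval I satisfying equations (i) and (ii) of the system (ODE), and suppose τ is not identically zero on I. Fix indices i ≠ j. If λᵢ = λⱼ identically on I, then either μᵢ = μⱼ identically on I or λᵢ = −τ/2 identically on I. Conversely, if μᵢ = μⱼ identically on I, then λᵢ = λⱼ identically on I. -/

import Mathlib

/-- If `f * g = 0` on an open preconnected set, with `f, g` analytic and `f` not
identically zero on it, then `g` vanishes identically. -/
lemma analytic_mul_eq_zero {f g : ℝ → ℝ} {I : Set ℝ} (hI : IsOpen I)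
    (hIc : IsPreconnected I)
    (hf : AnalyticOnNhd ℝ f I) (hg : AnalyticOnNhd ℝ g I)
    (h : ∀ t ∈ I, f t * g t = 0) (hfne : ¬ ∀ t ∈ I, f t = 0) :
    ∀ t ∈ I, g t = 0 := by
  push_neg at hfne
  obtain ⟨t₀, ht₀, hft₀⟩ := hfne
  have hcont : ContinuousAt f t₀ := (hf t₀ ht₀).continuousAt
  have h1 : ∀ᶠ t in nhds t₀, f t ≠ 0 := hcont.eventually_ne hft₀
  have h2 : ∀ᶠ t in nhds t₀, t ∈ I := hI.eventually_mem ht₀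
  have h3 : ∀ᶠ t in nhds t₀, g t = 0 := by
    filter_upwards [h1, h2] with t hft htI
    have := h t htI
    rcases mul_eq_zero.1 this with h' | h'
    · exact absurd h' hft
    · exact h'
  have hfreq : ∃ᶠ t in nhdsWithin t₀ {t₀}ᶜ, g t = 0 :=
    (h3.filter_mono nhdsWithin_le_nhds).frequently
  have := hg.eqOn_zero_of_preconnected_of_frequently_eq_zero hIc ht₀ hfreq
  exact fun t ht => this ht

/-- Lemma (same λ ⟺ same μ): for a real-analytic solution of equations (i), (ii)
with `τ` not identically zero, `λᵢ ≡ λⱼ` implies `μᵢ ≡ μⱼ` or `λᵢ ≡ -τ/2`;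
conversely `μᵢ ≡ μⱼ` implies `λᵢ ≡ λⱼ`. -/
theorem stmt_5 (n₁ : ℕ) (hn : 1 ≤ n₁) (K : ℝ)
    (I : Set ℝ) (hI : IsOpen I) (hIconn : I.OrdConnected)
    (lam mu : Fin n₁ → ℝ → ℝ)
    (hlam : ∀ i, AnalyticOnNhd ℝ (lam i) I)
    (hmu : ∀ i, AnalyticOnNhd ℝ (mu i) I)
    (tau : ℝ → ℝ) (htau : ∀ t, tau t = (2/3) * ∑ i, lam i t)
    (hode1 : ∀ i, ∀ t ∈ I, HasDerivAt (lam i) ((tau t / 2 + lam i t) * mu i t) t)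
    (hode2 : ∀ i, ∀ t ∈ I,
      HasDerivAt (mu i) ((mu i t) ^ 2 - tau t / 2 * lam i t + K) t)
    (htau_ne : ¬ ∀ t ∈ I, tau t = 0)
    (i j : Fin n₁) (hij : i ≠ j) :
    ((∀ t ∈ I, lam i t = lam j t) →
      ((∀ t ∈ I, mu i t = mu j t) ∨ (∀ t ∈ I, lam i t = -(tau t) / 2))) ∧
    ((∀ t ∈ I, mu i t = mu j t) → (∀ t ∈ I, lam i t = lam j t)) := by
  have hIc : IsPreconnected I := hIconn.isPreconnected
  have htau_fun : tau = fun t => (2/3) * ∑ i, lam i t := funext htau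
  have htau_an : AnalyticOnNhd ℝ tau I := by
    rw [htau_fun]
    exact AnalyticOnNhd.mul analyticOnNhd_const
      (Finset.analyticOnNhd_fun_sum Finset.univ fun k _ => hlam k)
  constructor
  · intro hll
    -- (τ/2 + λᵢ) * (μᵢ - μⱼ) = 0 on I
    have key : ∀ t ∈ I, (tau t / 2 + lam i t) * (mu i t - mu j t) = 0 := by
      intro t ht
      have hdi := hode1 i t ht
      have hdj := hode1 j t ht
      have heq : lam i =ᶠ[nhds t] lam j := by
        filter_upwards [hI.eventually_mem ht] with s hs using hll s hs
      have hdj' : HasDerivAt (lam i) ((tau t / 2 + lam j t) * mu j t) t :=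
        hdj.congr_of_eventuallyEq heq
      have := hdi.unique hdj'
      rw [hll t ht] at this ⊢
      ring_nf
      linarith [this]
    by_cases hmm : ∀ t ∈ I, tau t / 2 + lam i t = 0
    · right
      intro t ht
      have := hmm t ht
      linarith
    · left
      have := analytic_mul_eq_zero hI hIc
        ((htau_an.div analyticOnNhd_const (fun t _ => two_ne_zero)).add (hlam i))
        ((hmu i).sub (hmu j)) key hmm
      intro t ht
      have h := this t ht
      simpa [sub_eq_zero] using h
  · intro hmm t ht
    -- τ * (λᵢ - λⱼ) = 0 on I
    have key : ∀ t ∈ I, tau t * (lam i t - lam j t) = 0 := by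
      intro s hs
      have hdi := hode2 i s hs
      have hdj := hode2 j s hs
      have heq : mu i =ᶠ[nhds s] mu j := by
        filter_upwards [hI.eventually_mem hs] with u hu using hmm u hu
      have hdj' : HasDerivAt (mu i) ((mu j s) ^ 2 - tau s / 2 * lam j s + K) s :=
        hdj.congr_of_eventuallyEq heq
      have h := hdi.unique hdj'
      rw [hmm s hs] at h
      ring_nf
      ring_nf at h
      linarith
    have := analytic_mul_eq_zero hI hIc htau_an ((hlam i).sub (hlam j)) key htau_ne
    have h := this t ht
    simpa [sub_eq_zero] using h
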